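/- arXiv:1302.1695 — 2 statements merged into one kernel-verified Lean document; each statement's English description precedes it below -/
import Mathlib

section
/- Hurwitz's theorem in one complex variable for zero-free functions: if a sequence of holomorphic functions f_n on a connected open set U ⊆ ℂ, each nowhere zero on U, converges locally uniformly to a holomorphic function f, then either f is nowhere zero on U or f is identically zero on U. -/
theorem hurwitz_zero_free (U : Set ℂ) (hU : IsOpen U) (hUc : IsPreconnected U)
    (F : ℕ → ℂ → ℂ) (f : ℂ → ℂ)
    (hF : ∀ n, DifferentiableOn ℂ (F n) U)
    (hFz : ∀ n, ∀ z ∈ U, F n z ≠ 0)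
    (hf : DifferentiableOn ℂ f U)
    (hconv : TendstoLocallyUniformlyOn F f Filter.atTop U) :
    (∀ z ∈ U, f z ≠ 0) ∨ (∀ z ∈ U, f z = 0) := by
  by_cases hzero : ∀ z ∈ U, f z = 0
  · exact Or.inr hzero
  refine Or.inl fun z₀ hz₀ hfz₀ => ?_
  have hfa : AnalyticOnNhd ℂ f U := hf.analyticOnNhd hU
  -- zeros of f are isolated (else f ≡ 0)
  have hiso : ∀ᶠ z in nhdsWithin z₀ {z₀}ᶜ, f z ≠ 0 := by
    rcases (hfa z₀ hz₀).eventually_eq_zero_or_eventually_ne_zero with h | h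
    · exact absurd (fun z hz =>
        hfa.eqOn_zero_of_preconnected_of_eventuallyEq_zero hUc hz₀ h hz) hzero
    · exact h
  -- choose r > 0 with closedBall ⊆ U and f ≠ 0 on the punctured closed ball
  obtain ⟨t, hto, htm⟩ := (eventually_nhdsWithin_iff.mp hiso).exists_mem
  rcases Metric.mem_nhds_iff.mp hto with ⟨ε, hε, hεt⟩
  rcases Metric.mem_nhds_iff.mp (hU.mem_nhds hz₀) with ⟨δ, hδ, hδU⟩
  set r : ℝ := min ε δ / 2 with hr
  have hrpos : 0 < r := by positivity
  have hball : Metric.closedBall z₀ r ⊆ U := fun z hz =>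
    hδU (lt_of_le_of_lt (Metric.mem_closedBall.mp hz)
      (by rw [hr]; exact lt_of_lt_of_le (by linarith [lt_min hε hδ, min_le_right ε δ] :
        min ε δ / 2 < min ε δ) (min_le_right ε δ)))
  have hfne : ∀ z ∈ Metric.sphere z₀ r, f z ≠ 0 := by
    intro z hz
    have hzne : z ≠ z₀ := by
      intro h; rw [h] at hz
      simp only [Metric.mem_sphere, dist_self] at hz
      exact hrpos.ne hz
    refine htm z (hεt ?_) hzne
    have : dist z z₀ = r := Metric.mem_sphere.mp hz
    rw [Metric.mem_ball, this, hr]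
    exact lt_of_lt_of_le (by linarith [lt_min hε hδ] : min ε δ / 2 < min ε δ) (min_le_left ε δ)
  -- min of ‖f‖ on the sphere
  have hsc : IsCompact (Metric.sphere z₀ r) := isCompact_sphere z₀ r
  have hfc : ContinuousOn f (Metric.sphere z₀ r) :=
    (hf.continuousOn).mono fun z hz => hball (Metric.sphere_subset_closedBall hz)
  have hne : (Metric.sphere z₀ r).Nonempty := NormedSpace.sphere_nonempty.mpr hrpos.le
  obtain ⟨w, hw, hwmin⟩ := hsc.exists_isMinOn hne (continuous_norm.comp_continuousOn hfc)
  set m : ℝ := ‖f w‖ with hm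
  have hmpos : 0 < m := norm_pos_iff.mpr (hfne w hw)
  -- uniform convergence on the closed ball
  have hcball : IsCompact (Metric.closedBall z₀ r) := isCompact_closedBall z₀ r
  have huc : TendstoUniformlyOn F f Filter.atTop (Metric.closedBall z₀ r) :=
    (tendstoLocallyUniformlyOn_iff_forall_isCompact hU).mp hconv _ hball hcball
  have h1 : ∀ᶠ n in Filter.atTop, ∀ z ∈ Metric.closedBall z₀ r, dist (f z) (F n z) < m / 2 :=
    Metric.tendstoUniformlyOn_iff.mp huc (m / 2) (by positivity)
  have h2 : Filter.Tendsto (fun n => F n z₀) Filter.atTop (nhds (f z₀)) :=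
    hconv.tendsto_at hz₀
  have h3 : ∀ᶠ n in Filter.atTop, ‖F n z₀‖ < m / 2 := by
    have := h2.norm
    rw [hfz₀, norm_zero] at this
    exact this.eventually (eventually_lt_nhds (by positivity : (0:ℝ) < m / 2))
  obtain ⟨n, hn1, hn3⟩ := (h1.and h3).exists
  -- on the sphere, ‖F n z‖ ≥ m/2
  have hFlb : ∀ z ∈ Metric.sphere z₀ r, m / 2 ≤ ‖F n z‖ := by
    intro z hz
    have h4 : dist (f z) (F n z) < m / 2 := hn1 z (Metric.sphere_subset_closedBall hz)
    have h5 : m ≤ ‖f z‖ := hwmin hz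
    have := norm_sub_norm_le (f z) (F n z)
    rw [← dist_eq_norm] at this
    linarith
  -- max modulus for 1/(F n) on the ball
  set g : ℂ → ℂ := fun z => (F n z)⁻¹ with hg
  have hgd : DifferentiableOn ℂ g U := (hF n).inv (hFz n)
  have hgcl : DiffContOnCl ℂ g (Metric.ball z₀ r) := by
    refine DifferentiableOn.diffContOnCl ?_
    rw [closure_ball z₀ hrpos.ne']
    exact hgd.mono hball
  have hbd : Bornology.IsBounded (Metric.ball z₀ r) := Metric.isBounded_ball
  have hfr : ∀ z ∈ frontier (Metric.ball z₀ r), ‖g z‖ ≤ 2 / m := by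
    intro z hz
    rw [frontier_ball z₀ hrpos.ne'] at hz
    have hlb := hFlb z hz
    rw [hg]
    simp only [norm_inv]
    rw [inv_le_comm₀ (lt_of_lt_of_le (by positivity) hlb) (by positivity),
      show (2/m)⁻¹ = m/2 by field_simp]
    exact hlb
  have hz₀cl : z₀ ∈ closure (Metric.ball z₀ r) := subset_closure (Metric.mem_ball_self hrpos)
  have hmax : ‖g z₀‖ ≤ 2 / m :=
    Complex.norm_le_of_forall_mem_frontier_norm_le hbd hgcl hfr hz₀cl
  -- contradiction
  have hFnz₀ : F n z₀ ≠ 0 := hFz n z₀ hz₀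
  have : m / 2 ≤ ‖F n z₀‖ := by
    rw [hg] at hmax
    simp only [norm_inv] at hmax
    rw [inv_le_comm₀ (norm_pos_iff.mpr hFnz₀) (by positivity),
      show (2/m)⁻¹ = m/2 by field_simp] at hmax
    exact hmax
  linarith
end

section
/- Montel's theorem: a family of holomorphic functions on an open set Ω ⊆ ℂ that is uniformly bounded on each compact subset of Ω is a normal family, i.e., every sequence has a subsequence converging locally uniformly on Ω to a holomorphic function. -/
open Set Metric Filter Complex ENNReal

/-- Compact exhaustion of an open subset of ℂ. -/
lemma montel_exhaustion {Ω : Set ℂ} (hΩ : IsOpen Ω) :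
    ∃ t : ℕ → Set ℂ, (∀ n, IsCompact (t n)) ∧ (∀ n, t n ⊆ Ω) ∧ Monotone t ∧
      ∀ K, K ⊆ Ω → IsCompact K → ∃ n, K ⊆ t n := by
  set f : ℂ → ℝ≥0∞ := fun z => EMetric.infEdist z Ωᶜ with hf
  refine ⟨fun n => closedBall 0 n ∩ {z | ENNReal.ofReal ((n : ℝ) + 1)⁻¹ ≤ f z}, ?_, ?_, ?_, ?_⟩
  · intro n
    have hcl : IsClosed (closedBall (0:ℂ) n ∩ {z | ENNReal.ofReal ((n : ℝ) + 1)⁻¹ ≤ f z}) :=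
      (Metric.isClosed_closedBall).inter (isClosed_le continuous_const (EMetric.continuous_infEdist))
    exact (isCompact_closedBall (0:ℂ) n).of_isClosed_subset hcl inter_subset_left
  · intro n z hz
    by_contra hzΩ
    have h0 : f z = 0 := EMetric.infEdist_zero_of_mem (by simpa using hzΩ)
    have h2 : ENNReal.ofReal ((n : ℝ) + 1)⁻¹ ≤ f z := hz.2
    rw [h0, nonpos_iff_eq_zero, ENNReal.ofReal_eq_zero] at h2
    have : (0:ℝ) < ((n : ℝ) + 1)⁻¹ := by positivity
    linarith
  · intro m n hmn z hz
    obtain ⟨h1, h2⟩ := hz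
    have h2 : ENNReal.ofReal ((m : ℝ) + 1)⁻¹ ≤ f z := h2
    refine ⟨closedBall_subset_closedBall (by exact_mod_cast hmn) h1, ?_⟩
    show ENNReal.ofReal ((n : ℝ) + 1)⁻¹ ≤ f z
    refine le_trans (ENNReal.ofReal_le_ofReal ?_) h2
    have : (m:ℝ) ≤ n := by exact_mod_cast hmn
    apply inv_anti₀ (by positivity)
    linarith
  · intro K hKΩ hK
    rcases K.eq_empty_or_nonempty with rfl | hne
    · exact ⟨0, empty_subset _⟩
    obtain ⟨z₀, hz₀K, hz₀min⟩ := hK.exists_isMinOn hne (EMetric.continuous_infEdist.continuousOn)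
    have hz₀pos : 0 < f z₀ := by
      rcases eq_or_lt_of_le (zero_le : 0 ≤ f z₀) with h | h
      · exfalso
        have : z₀ ∈ closure Ωᶜ := EMetric.mem_closure_iff_infEdist_zero.mpr h.symm
        rw [hΩ.isClosed_compl.closure_eq] at this
        exact this (hKΩ hz₀K)
      · exact h
    obtain ⟨ε, hε0, hεle⟩ : ∃ ε : ℝ, 0 < ε ∧ ENNReal.ofReal ε ≤ f z₀ := by
      rcases eq_or_ne (f z₀) ⊤ with h | h
      · exact ⟨1, one_pos, by simp [h]⟩
      · exact ⟨(f z₀).toReal, ENNReal.toReal_pos hz₀pos.ne' h, by rw [ENNReal.ofReal_toReal h]⟩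
    obtain ⟨r, hKr⟩ := hK.isBounded.subset_closedBall 0
    set n : ℕ := max ⌈r⌉₊ ⌈1/ε⌉₊ with hn
    refine ⟨n, fun z hz => ⟨?_, ?_⟩⟩
    · refine closedBall_subset_closedBall ?_ (hKr hz)
      calc r ≤ ⌈r⌉₊ := Nat.le_ceil r
        _ ≤ (n : ℝ) := by exact_mod_cast Nat.cast_le.mpr (le_max_left _ _)
    · show ENNReal.ofReal ((n : ℝ) + 1)⁻¹ ≤ f z
      have h1ε : 1/ε ≤ (n : ℝ) + 1 := by
        calc 1/ε ≤ ⌈1/ε⌉₊ := Nat.le_ceil _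
          _ ≤ (n : ℝ) := by exact_mod_cast Nat.cast_le.mpr (le_max_right _ _)
          _ ≤ (n : ℝ) + 1 := by linarith
      have hinv : ((n : ℝ) + 1)⁻¹ ≤ ε := by
        rw [inv_le_comm₀ (by positivity) hε0]
        simpa [one_div] using h1ε
      calc ENNReal.ofReal ((n : ℝ) + 1)⁻¹ ≤ ENNReal.ofReal ε := ENNReal.ofReal_le_ofReal hinv
        _ ≤ f z₀ := hεle
        _ ≤ f z := hz₀min hz

lemma montel_equicontAt {Ω : Set ℂ} (hΩ : IsOpen Ω) {F : ℕ → ℂ → ℂ}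
    (hF : ∀ n, DifferentiableOn ℂ (F n) Ω)
    (hbd : ∀ K : Set ℂ, K ⊆ Ω → IsCompact K →
      ∃ M : ℝ, ∀ n, ∀ z ∈ K, ‖F n z‖ ≤ M)
    {x : ℂ} (hx : x ∈ Ω) : EquicontinuousAt F x := by
  obtain ⟨ε, hε0, hεsub⟩ := nhds_basis_closedBall.mem_iff.mp (hΩ.mem_nhds hx)
  set r : ℝ := ε / 2 with hr
  have hr0 : 0 < r := half_pos hε0
  obtain ⟨M, hM⟩ := hbd (closedBall x ε) hεsub (isCompact_closedBall _ _)
  have hM0 : 0 ≤ M := le_trans (norm_nonneg _) (hM 0 x (mem_closedBall_self hε0.le))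
  set C : ℝ := M / r with hC
  have hC0 : 0 ≤ C := div_nonneg hM0 hr0.le
  have hsub2 : ∀ w ∈ closedBall x r, closedBall w r ⊆ closedBall x ε := by
    intro w hw y hy
    rw [mem_closedBall] at *
    calc dist y x ≤ dist y w + dist w x := dist_triangle _ _ _
      _ ≤ r + r := add_le_add hy hw
      _ = ε := by rw [hr]; ring
  have hderiv : ∀ n, ∀ w ∈ closedBall x r, ‖deriv (F n) w‖ ≤ C := by
    intro n w hw
    refine Complex.norm_deriv_le_of_forall_mem_sphere_norm_le hr0 ?_ ?_
    · refine DifferentiableOn.diffContOnCl ((hF n).mono ?_)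
      exact fun y hy => hεsub (hsub2 w hw (closure_ball_subset_closedBall hy))
    · intro z hz
      have hz' : z ∈ closedBall x ε := hsub2 w hw (sphere_subset_closedBall hz)
      simpa using hM n z hz'
  have hlip : ∀ n, ∀ y ∈ closedBall x r, ‖F n y - F n x‖ ≤ C * ‖y - x‖ := by
    intro n y hy
    refine Convex.norm_image_sub_le_of_norm_deriv_le (f := F n) ?_
      (hderiv n) (convex_closedBall x r) (mem_closedBall_self hr0.le) hy
    intro w hw
    exact (hF n).differentiableAt
      (hΩ.mem_nhds (hεsub (closedBall_subset_closedBall (by linarith) hw)))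
  rw [Metric.equicontinuousAt_iff]
  intro δ hδ0
  refine ⟨min r (δ / (C + 1)), lt_min hr0 (by positivity), fun y hy n => ?_⟩
  have hyr : y ∈ closedBall x r := mem_closedBall.mpr (le_of_lt (lt_of_lt_of_le hy (min_le_left _ _)))
  have h1 : dist (F n x) (F n y) ≤ C * dist y x := by
    rw [dist_comm, dist_eq_norm]
    simpa [dist_eq_norm] using hlip n y hyr
  have h2 : dist y x ≤ δ / (C + 1) := le_of_lt (lt_of_lt_of_le hy (min_le_right _ _))
  calc dist (F n x) (F n y) ≤ C * dist y x := h1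
    _ ≤ C * (δ / (C + 1)) := by
        exact mul_le_mul_of_nonneg_left h2 hC0
    _ < δ := by
        rw [div_eq_mul_inv]
        nlinarith [mul_pos hδ0 (by positivity : (0:ℝ) < (C+1)⁻¹), inv_mul_cancel₀ (by positivity : (C:ℝ)+1 ≠ 0)]
theorem montel (Ω : Set ℂ) (hΩ : IsOpen Ω)
    (F : ℕ → ℂ → ℂ) (hF : ∀ n, DifferentiableOn ℂ (F n) Ω)
    (hbd : ∀ K : Set ℂ, K ⊆ Ω → IsCompact K →
      ∃ M : ℝ, ∀ n, ∀ z ∈ K, ‖F n z‖ ≤ M) :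
    ∃ φ : ℕ → ℕ, StrictMono φ ∧ ∃ g : ℂ → ℂ,
      DifferentiableOn ℂ g Ω ∧
      TendstoLocallyUniformlyOn (fun k => F (φ k)) g Filter.atTop Ω := by
  classical
  set 𝔖 : Set (Set ℂ) := {K | K ⊆ Ω ∧ IsCompact K} with h𝔖
  obtain ⟨t, htc, htΩ, htmono, htex⟩ := montel_exhaustion hΩ
  haveI hcg : (uniformity (UniformOnFun ℂ ℂ 𝔖)).IsCountablyGenerated :=
    UniformOnFun.isCountablyGenerated_uniformity 𝔖 (t := t)
      (fun n => ⟨htΩ n, htc n⟩) htmono (fun K hK => htex K hK.1 hK.2)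
  set u : ℕ → UniformOnFun ℂ ℂ 𝔖 := fun n => UniformOnFun.ofFun 𝔖 (F n) with hu
  set s : Set (UniformOnFun ℂ ℂ 𝔖) := Set.range u with hs
  -- equicontinuity on each compact
  have heq : ∀ K ∈ 𝔖, EquicontinuousOn F K := by
    intro K hK x hx
    exact (montel_equicontAt hΩ hF hbd (hK.1 hx)).equicontinuousWithinAt K
  -- Arzela-Ascoli
  have hcompact : IsCompact (closure s) := by
    refine ArzelaAscoli.isCompact_closure_of_isClosedEmbedding
      (𝔖 := 𝔖) (F := (UniformOnFun.toFun 𝔖 : UniformOnFun ℂ ℂ 𝔖 → ℂ → ℂ))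
      (fun K hK => hK.2) ?_ ?_ ?_
    · exact Topology.IsClosedEmbedding.id
    · intro K hK
      have : (UniformOnFun.toFun 𝔖 ∘ ((↑) : s → UniformOnFun ℂ ℂ 𝔖)) =
          F ∘ (fun i : s => i.2.choose) := by
        funext i
        have := i.2.choose_spec
        exact (congrArg (UniformOnFun.toFun 𝔖) this).symm
      rw [this]
      exact (heq K hK).comp _
    · intro K hK x hx
      obtain ⟨M, hM⟩ := hbd K hK.1 hK.2
      refine ⟨closedBall 0 M, isCompact_closedBall _ _, ?_⟩
      rintro i ⟨n, rfl⟩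
      rw [mem_closedBall_zero_iff]
      exact hM n x hx
  -- extract convergent subsequence
  obtain ⟨g', _, φ, hφ, htend⟩ := hcompact.isSeqCompact (fun n => subset_closure ⟨n, rfl⟩)
  set g : ℂ → ℂ := UniformOnFun.toFun 𝔖 g' with hg
  have htu : ∀ K ∈ 𝔖, TendstoUniformlyOn (fun k => F (φ k)) g atTop K := by
    have := (UniformOnFun.tendsto_iff_tendstoUniformlyOn
      (F := u ∘ φ) (f := g')).mp htend
    exact this
  have htlu : TendstoLocallyUniformlyOn (fun k => F (φ k)) g atTop Ω := by
    rw [tendstoLocallyUniformlyOn_iff_forall_isCompact hΩ]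
    exact fun K hK1 hK2 => htu K ⟨hK1, hK2⟩
  exact ⟨φ, hφ, g, htlu.differentiableOn (Eventually.of_forall fun k => hF (φ k)) hΩ, htlu⟩
end
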